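/- arXiv:1507.01925 — 2 statements merged into one kernel-verified Lean document; each statement's English description precedes it below -/
import Mathlib

section
/- If f : R → A is an epimorphism of commutative rings, then the module of Kähler differentials Ω_{A/R} is zero. -/
open TensorProduct

universe u v

/-- If `R → A` is an epimorphism of commutative rings (equivalently, the multiplication map
`A ⊗[R] A → A` is bijective), then the module of Kähler differentials `Ω[A⁄R]` is zero. -/
theorem kaehlerDifferential_subsingleton_of_epi {R : Type u} {A : Type v} [CommRing R]
    [CommRing A] [Algebra R A]
    (hepi : Function.Bijective ⇑(Algebra.TensorProduct.lmul' (S := A) R)) :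
    Subsingleton (Ω[A⁄R]) := by
  have h : KaehlerDifferential.ideal R A = ⊥ := by
    rw [KaehlerDifferential.ideal, RingHom.ker_eq_bot_iff_eq_zero]
    intro x hx
    exact hepi.injective (by simpa using hx)
  have hs : Subsingleton (KaehlerDifferential.ideal R A) := by
    rw [h]; infer_instance
  unfold KaehlerDifferential Ideal.Cotangent
  exact (Submodule.Quotient.mk_surjective _).subsingleton
end

section
/- Let R be a commutative ring, I ⊆ R a finitely generated ideal, and A a commutative R-algebra such that I·A = A. Then for every R-module M that is I-power torsion (every element of M is annihilated by some power of I), one has M ⊗_R A = 0. -/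
open TensorProduct

universe u v w

/-- Let `I ⊆ R` be a finitely generated ideal and `A` an `R`-algebra with `I · A = A`.
Then for every `I`-power torsion `R`-module `M`, one has `M ⊗[R] A = 0`. -/
theorem tensor_eq_zero_of_powerTorsion {R : Type u} [CommRing R] (I : Ideal R) (hfg : I.FG)
    (A : Type v) [CommRing A] [Algebra R A] (hIA : I.map (algebraMap R A) = ⊤)
    (M : Type w) [AddCommGroup M] [Module R M]
    (htors : ∀ m : M, ∃ k : ℕ, ∀ r ∈ I ^ k, r • m = 0) :
    Subsingleton (M ⊗[R] A) := by
  have key : ∀ (m : M) (a : A), (m ⊗ₜ[R] a : M ⊗[R] A) = 0 := by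
    intro m a
    obtain ⟨k, hkm⟩ := htors m
    have hk : Ideal.map (algebraMap R A) (I ^ k) = ⊤ := by
      rw [Ideal.map_pow, hIA, Ideal.top_pow]
    have h1 : (1 : A) ∈ Ideal.map (algebraMap R A) (I ^ k) := hk ▸ trivial
    rw [Ideal.map, Ideal.span] at h1
    have : ∀ x ∈ Ideal.span ((algebraMap R A) '' ↑(I ^ k)),
        ∀ b : A, (m ⊗ₜ[R] (x * b) : M ⊗[R] A) = 0 := by
      intro x hx
      induction hx using Submodule.span_induction with
      | mem y hy =>
        obtain ⟨r, hr, rfl⟩ := hy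
        intro b
        rw [← Algebra.smul_def, tmul_smul, smul_tmul', hkm r hr, zero_tmul]
      | zero => simp
      | add y z _ _ hy hz => intro b; rw [add_mul, tmul_add, hy b, hz b, add_zero]
      | smul c y _ hy =>
        intro b
        rw [smul_eq_mul, mul_comm c y, mul_assoc]
        exact hy (c * b)
    simpa using this 1 h1 a
  constructor
  intro x y
  have hz : ∀ z : M ⊗[R] A, z = 0 := by
    intro z
    induction z using TensorProduct.induction_on with
    | zero => rfl
    | tmul m a => exact key m a
    | add u v hu hv => rw [hu, hv, add_zero]
  rw [hz x, hz y]
end
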